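/- Let R > 0 and α, β, w ∈ ℝ with w ≠ 0, α ≠ 0 and β + w + (1 − βw)α ≠ 0. Set a = Rα, b = β/R, and define ζ(u) = (R/u)(1 − bu)/(1 − au). Suppose v₀ ∈ ℝ \ {0} satisfies 1 − av₀ ≠ 0, v₀ − a ≠ 0, ζ(v₀) = w and ζ(1/v₀) = −1/w. Then, with 𝒜 := (1 + α²)/(β + w + (1 − βw)α), one has v₀ = R𝒜 and R² = ((β + w)𝒜 − 1)/(αw𝒜²). -/

import Mathlib

theorem stmt_7 (R α β w : ℝ) (hR : R > 0) (hw : w ≠ 0) (hα : α ≠ 0)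
    (hden : β + w + (1 - β * w) * α ≠ 0)
    (a b : ℝ) (ha : a = R * α) (hb : b = β / R)
    (ζ : ℝ → ℝ) (hζ : ∀ u, ζ u = (R / u) * (1 - b * u) / (1 - a * u))
    (v₀ : ℝ) (hv₀ : v₀ ≠ 0) (h1 : 1 - a * v₀ ≠ 0) (h2 : v₀ - a ≠ 0)
    (h3 : ζ v₀ = w) (h4 : ζ (1 / v₀) = -1 / w) :
    v₀ = R * ((1 + α ^ 2) / (β + w + (1 - β * w) * α)) ∧
    R ^ 2 = ((β + w) * ((1 + α ^ 2) / (β + w + (1 - β * w) * α)) - 1) /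
      (α * w * ((1 + α ^ 2) / (β + w + (1 - β * w) * α)) ^ 2) := by
  have hRne : R ≠ 0 := ne_of_gt hR
  subst ha hb
  rw [hζ] at h3 h4
  have h1' : 1 - R * v₀ * α ≠ 0 := by rwa [mul_right_comm]
  field_simp at h3 h4
  set D : ℝ := β + w + (1 - β * w) * α with hD
  have key : R * (1 + α ^ 2) = v₀ * D :=
    mul_left_cancel₀ hRne (by linear_combination R * h3 - R * α * h4)
  have hv : v₀ = R * ((1 + α ^ 2) / D) := by
    field_simp
    linear_combination -key
  refine ⟨hv, ?_⟩
  have e : w * (1 + α ^ 2) * (R ^ 2 * (1 + α ^ 2) - β * D) =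
      α * D ^ 2 - (1 + α ^ 2) * D :=
    mul_left_cancel₀ hRne (by
      linear_combination D ^ 2 * h4 +
        (w * R * (R * (1 + α ^ 2) + v₀ * D) - β * w * D + D) * key)
  field_simp
  linear_combination α * e + D * (1 + α ^ 2) * hD
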